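/- Over a commutative ring R in which 2 is invertible, the Lee Frobenius algebra (m(x_−⊗x_−)=x_+, Δ(x_−)=x_−⊗x_− + x_+⊗x_+, Δ(x_+)=x_+⊗x_−+x_−⊗x_+, m(x_+⊗x_±)=x_±) and the Bar-Natan Frobenius algebra are isomorphic as Frobenius algebras after a rescaling (twist): explicitly, there is an R-module automorphism of R⟨x_+,x_−⟩ intertwining the two multiplications and intertwining the comultiplications up to an invertible scalar. -/

import Mathlib

open TensorProduct

/-!
The Bar-Natan and Lee Frobenius algebras over a commutative ring `R`.  The underlying
module is `V = R⟨x₊, x₋⟩`, realized as `R × R` (first coordinate: coefficient of `x₊`;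
second: coefficient of `x₋`).
-/

variable (R : Type*) [CommRing R]

/-- The basis element `x₊ = (1,0)`. -/
def xp : R × R := (1, 0)

/-- The basis element `x₋ = (0,1)`. -/
def xm : R × R := (0, 1)

/-- Bar-Natan multiplication: `x₊` is the unit, `x₋x₋ = x₋`. -/
def mulBN : (R × R) →ₗ[R] (R × R) →ₗ[R] (R × R) :=
  LinearMap.mk₂ R (fun v w => (v.1 * w.1, v.1 * w.2 + v.2 * w.1 + v.2 * w.2))
    (by intro m₁ m₂ n; simp [Prod.ext_iff]; constructor <;> ring)
    (by intro c m n; simp [Prod.ext_iff, smul_eq_mul]; constructor <;> ring)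
    (by intro m n₁ n₂; simp [Prod.ext_iff]; constructor <;> ring)
    (by intro c m n; simp [Prod.ext_iff, smul_eq_mul]; constructor <;> ring)

/-- Lee multiplication: `x₊` is the unit, `x₋x₋ = x₊`. -/
def mulLee : (R × R) →ₗ[R] (R × R) →ₗ[R] (R × R) :=
  LinearMap.mk₂ R (fun v w => (v.1 * w.1 + v.2 * w.2, v.1 * w.2 + v.2 * w.1))
    (by intro m₁ m₂ n; simp [Prod.ext_iff]; constructor <;> ring)
    (by intro c m n; simp [Prod.ext_iff, smul_eq_mul]; constructor <;> ring)
    (by intro m n₁ n₂; simp [Prod.ext_iff]; constructor <;> ring)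
    (by intro c m n; simp [Prod.ext_iff, smul_eq_mul]; constructor <;> ring)

/-- Bar-Natan comultiplication: `Δ(x₋) = x₋⊗x₋`, `Δ(x₊) = x₊⊗x₋ + x₋⊗x₊ − x₊⊗x₊`. -/
noncomputable def deltaBN : (R × R) →ₗ[R] (R × R) ⊗[R] (R × R) :=
  (LinearMap.toSpanSingleton R _
      (xp R ⊗ₜ[R] xm R + xm R ⊗ₜ[R] xp R - xp R ⊗ₜ[R] xp R)).comp (LinearMap.fst R R R)
  + (LinearMap.toSpanSingleton R _ (xm R ⊗ₜ[R] xm R)).comp (LinearMap.snd R R R)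

/-- Lee comultiplication: `Δ(x₋) = x₋⊗x₋ + x₊⊗x₊`, `Δ(x₊) = x₊⊗x₋ + x₋⊗x₊`. -/
noncomputable def deltaLee : (R × R) →ₗ[R] (R × R) ⊗[R] (R × R) :=
  (LinearMap.toSpanSingleton R _
      (xp R ⊗ₜ[R] xm R + xm R ⊗ₜ[R] xp R)).comp (LinearMap.fst R R R)
  + (LinearMap.toSpanSingleton R _
      (xm R ⊗ₜ[R] xm R + xp R ⊗ₜ[R] xp R)).comp (LinearMap.snd R R R)

/-- Over a commutative ring `R` in which `2` is invertible, the Lee and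
Bar-Natan Frobenius algebras are twist-equivalent: there is an `R`-module automorphism
`φ` of `R⟨x₊, x₋⟩` intertwining the two multiplications, and intertwining the
comultiplications up to an invertible scalar `u`, i.e. `(φ⊗φ)∘Δ_BN = u · Δ_Lee∘φ`. -/
theorem stmt_6 (h2 : IsUnit (2 : R)) :
    ∃ (φ : (R × R) ≃ₗ[R] (R × R)) (u : Rˣ),
      (∀ v w : R × R, φ (mulBN R v w) = mulLee R (φ v) (φ w)) ∧
      ((TensorProduct.map φ.toLinearMap φ.toLinearMap).comp (deltaBN R)
        = (u : R) • ((deltaLee R).comp φ.toLinearMap)) := by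
  obtain ⟨h, hh⟩ : ∃ h : R, 2 * h = 1 := ⟨↑h2.unit⁻¹, by
    have := h2.unit.mul_inv; rwa [h2.unit_spec] at this⟩
  have hu : IsUnit h := IsUnit.of_mul_eq_one 2 (by linear_combination hh)
  set f : (R × R) →ₗ[R] (R × R) :=
    LinearMap.prod (LinearMap.fst R R R + h • LinearMap.snd R R R)
      (h • LinearMap.snd R R R) with hf
  set g : (R × R) →ₗ[R] (R × R) :=
    LinearMap.prod (LinearMap.fst R R R - LinearMap.snd R R R)
      ((2 : R) • LinearMap.snd R R R) with hg
  have key : ∀ (a b : R), ((a, b) : R × R) = a • xp R + b • xm R := by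
    intro a b; simp [xp, xm, Prod.ext_iff]
  have tt : ∀ a b c d : R, ((a, b) : R × R) ⊗ₜ[R] ((c, d) : R × R)
      = (a * c) • (xp R ⊗ₜ[R] xp R) + (a * d) • (xp R ⊗ₜ[R] xm R)
        + (b * c) • (xm R ⊗ₜ[R] xp R) + (b * d) • (xm R ⊗ₜ[R] xm R) := by
    intro a b c d
    rw [key a b, key c d]
    simp only [TensorProduct.tmul_add, TensorProduct.add_tmul, TensorProduct.smul_tmul',
      TensorProduct.smul_tmul, smul_smul]
    abel
  refine ⟨LinearEquiv.ofLinear f g ?_ ?_, hu.unit, ?_, ?_⟩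
  · refine LinearMap.ext fun v => ?_
    simp [hf, hg, Prod.ext_iff]
    constructor <;> linear_combination v.2 * hh
  · refine LinearMap.ext fun v => ?_
    simp [hf, hg, Prod.ext_iff]
    linear_combination v.2 * hh
  · intro v w
    simp only [mulBN, mulLee, LinearMap.mk₂_apply, hf, LinearEquiv.ofLinear_apply,
      LinearMap.prod_apply, Function.prod, LinearMap.add_apply, LinearMap.smul_apply,
      LinearMap.fst_apply, LinearMap.snd_apply, smul_eq_mul, Prod.ext_iff]
    constructor <;> linear_combination (-(h * v.2 * w.2)) * hh
  · refine LinearMap.ext fun v => ?_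
    simp only [LinearMap.comp_apply, LinearMap.smul_apply, deltaBN, deltaLee,
      LinearMap.add_apply, LinearMap.toSpanSingleton_apply,
      hf, LinearMap.prod_apply, LinearMap.fst_apply, LinearMap.snd_apply,
      LinearEquiv.ofLinear_toLinearMap, Function.prod,
      LinearEquiv.coe_coe, map_add, map_sub, map_smul, TensorProduct.map_tmul]
    rw [hu.unit_spec]
    simp only [xp, xm, smul_eq_mul, mul_zero, mul_one, add_zero, zero_add]
    rw [tt 1 0 h h, tt h h 1 0, tt 1 0 1 0, tt h h h h, tt 1 0 0 1, tt 0 1 1 0,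
      tt 0 1 0 1]
    match_scalars <;> first
      | ring1
      | linear_combination v.1 * hh
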